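/- Let (E, 𝐔) be a uniform convergence space in the sense of Beattie–Butzmann: 𝐔 ⊆ Fil(E × E) satisfies (i) 𝓤_{(x,x)} ∈ 𝐔 for all x ∈ E; (ii) 𝓤, 𝓥 ∈ 𝐔 implies 𝓤 ∩ 𝓥 ∈ 𝐔; (iii) 𝓤 ∈ 𝐔, 𝓥 ⊇ 𝓤 implies 𝓥 ∈ 𝐔; (iv) 𝓤 ∈ 𝐔 implies 𝓤⁻¹ ∈ 𝐔; (v) 𝓤, 𝓥 ∈ 𝐔 and 𝓤 ∘ 𝓥 a proper filter imply 𝓤 ∘ 𝓥 ∈ 𝐔. Define E' = Fil(E), T(A) = {𝓕 | A ∈ 𝓕} for nonempty A, and 𝓕 Ξ_𝐔 𝓖 iff 𝓕 × 𝓖 ∈ 𝐔, where 𝓕 × 𝓖 is the product filter on E × E. Then σ_𝐔 = (E, E', T, Ξ_𝐔) is a topological type structure, i.e., satisfies (TTP1), (TTP2), (TTS1), (TTS2), (TTS3). -/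

import Mathlib

/-- The set (type) of proper filters on `E`. -/
def Fil (E : Type*) := {F : Filter E // F.NeBot}

/-- The topological support mapping: `T A` consists of the proper filters containing
`A` (so `T ∅ = ∅`). -/
def filT {E : Type*} (A : Set E) : Set (Fil E) := {F | A ∈ F.1}

/-- The inverse `𝓤⁻¹` of a filter on `E × E`. -/
def filterInv {E : Type*} (V : Filter (E × E)) : Filter (E × E) :=
  Filter.map Prod.swap V

/-- The composition `𝓤 ∘ 𝓥` of two filters on `E × E`: the filter generated by the
relational composites `A ○ B` with `A ∈ 𝓤`, `B ∈ 𝓥`. -/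
def filterComp {E : Type*} (V W : Filter (E × E)) : Filter (E × E) :=
  V.lift fun A => W.lift' fun B => SetRel.comp A B

/-- Given a Beattie–Butzmann uniform convergence structure `U` on `E`, the Cauchy-ness
relation `Ξ_U` of (4.14): `𝓕 Ξ_U 𝓖` iff the product filter `𝓕 × 𝓖` belongs to `U`. -/
def XiU {E : Type*} (U : Set (Filter (E × E))) (F G : Fil E) : Prop :=
  F.1 ×ˢ G.1 ∈ U

/-- If `(E, U)` is a uniform convergence space in the sense of Beattie–Butzmann —
`U` is a set of proper filters on `E × E` satisfying (4.8)-(4.12) — then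
`σ_U = (E, Fil(E), T, Ξ_U)` is a topological type structure, i.e. it satisfies
(TTP1), (TTP2), (TTS1), (TTS2) and (TTS3). -/

lemma aux_symm {E : Type*} (U : Set (Filter (E × E)))
    (h411 : ∀ V ∈ U, filterInv V ∈ U) (F G : Fil E) (h : XiU U F G) : XiU U G F := by
  have := h411 _ h
  unfold XiU
  rwa [show G.1 ×ˢ F.1 = filterInv (F.1 ×ˢ G.1) from Filter.prod_comm]

lemma aux_comp {E : Type*} (F G : Filter E) [G.NeBot] :
    F ×ˢ F ≤ filterComp (F ×ˢ G) (G ×ˢ F) := by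
  rw [filterComp, Filter.le_lift]
  intro A hA
  rw [Filter.le_lift']
  intro B hB
  obtain ⟨s, hs, t, ht, hst⟩ := Filter.mem_prod_iff.1 hA
  obtain ⟨t', ht', s', hs', hts⟩ := Filter.mem_prod_iff.1 hB
  obtain ⟨y, hy⟩ := Filter.nonempty_of_mem (Filter.inter_mem ht ht')
  refine Filter.mem_of_superset (Filter.prod_mem_prod hs hs') ?_
  rintro ⟨a, b⟩ ⟨ha, hb⟩
  exact ⟨y, hst ⟨ha, hy.1⟩, hts ⟨hy.2, hb⟩⟩

theorem uniform_convergence_space_gives_tts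
    {E : Type*} (U : Set (Filter (E × E)))
    (hproper : ∀ V ∈ U, Filter.NeBot V)
    (h48 : ∀ x : E, pure (x, x) ∈ U)
    (h49 : ∀ V W : Filter (E × E), V ∈ U → W ∈ U → V ⊔ W ∈ U)
    (h410 : ∀ V W : Filter (E × E), V ∈ U → W ≤ V → W.NeBot → W ∈ U)
    (h411 : ∀ V ∈ U, filterInv V ∈ U)
    (h412 : ∀ V W : Filter (E × E), V ∈ U → W ∈ U →
      (filterComp V W).NeBot → filterComp V W ∈ U) :
    (∀ A B : Set E, A.Nonempty → A ⊆ B → (filT A).Nonempty ∧ filT A ⊆ filT B) ∧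
    filT (Set.univ : Set E) = Set.univ ∧
    (∀ (x : E) (F G : Fil E), F ∈ filT {x} → G ∈ filT {x} → XiU U F G) ∧
    (∀ F G : Fil E, XiU U F G → XiU U G F) ∧
    (∀ F G : Fil E, XiU U F G → XiU U F F) := by
  refine ⟨?_, ?_, ?_, aux_symm U h411, ?_⟩
  · intro A B hA hAB
    refine ⟨⟨⟨Filter.principal A, Filter.principal_neBot_iff.2 hA⟩,
      Filter.mem_principal_self A⟩, fun F hF => Filter.mem_of_superset hF hAB⟩
  · ext F; simp [filT, Filter.univ_mem]
  · intro x F G hF hG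
    haveI := F.2; haveI := G.2
    refine h410 _ _ (h48 x) ?_ (Filter.prod_neBot.2 ⟨F.2, G.2⟩)
    intro s hs
    have h1 : ({x} ×ˢ {x} : Set (E × E)) ∈ F.1 ×ˢ G.1 := Filter.prod_mem_prod hF hG
    refine Filter.mem_of_superset h1 ?_
    rintro ⟨a, b⟩ ⟨ha, hb⟩
    cases ha; cases hb; exact hs
  · intro F G h
    haveI := F.2; haveI := G.2
    have hGF := aux_symm U h411 F G h
    have hle := aux_comp F.1 G.1
    haveI hne : (filterComp (F.1 ×ˢ G.1) (G.1 ×ˢ F.1)).NeBot :=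
      Filter.neBot_of_le (f := F.1 ×ˢ F.1) hle
    exact h410 _ _ (h412 _ _ h hGF hne) hle (Filter.prod_neBot.2 ⟨F.2, F.2⟩)
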